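/- Let G be a unimodular locally compact group and K a compact open subgroup. If (π, H) is an irreducible unitary representation of G, then the Hecke algebra C_c(G, K) acts irreducibly on the space H^K of K-fixed vectors via π(f) = ∫_G f(g) π(g) dg, in the sense that H^K has no proper nonzero C_c(G,K)-invariant closed subspace. -/

import Mathlib

open MeasureTheory Pointwise

/-- The subspace of vectors fixed by a subgroup `K` under a unitary representation. -/
def fixedSubmodule {G E : Type*} [Group G] [NormedAddCommGroup E]
    [InnerProductSpace ℂ E] (π : G →* (E ≃ₗᵢ[ℂ] E)) (K : Subgroup G) :
    Submodule ℂ E where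
  carrier := {v | ∀ k ∈ K, π k v = v}
  add_mem' := by
    intro a b ha hb k hk
    simp [map_add, ha k hk, hb k hk]
  zero_mem' := by intro k hk; simp
  smul_mem' := by
    intro c a ha k hk
    simp [_root_.map_smul, ha k hk]

/-- Let G be a unimodular locally compact group with Haar measure μ and
K a compact open subgroup. If (π, H) is an irreducible unitary representation of G,
then the Hecke algebra C_c(G, K) acts irreducibly on the space H^K of K-fixed vectors
via π(f)v = ∫ f(g) π(g)v dμ(g): every closed C_c(G,K)-invariant subspace of H^K is
trivial. -/
theorem stmt_17 {G : Type*} [Group G] [TopologicalSpace G] [IsTopologicalGroup G]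
    [LocallyCompactSpace G] [MeasurableSpace G] [BorelSpace G]
    (μ : Measure G) [μ.IsHaarMeasure] [μ.IsMulRightInvariant]
    (K : Subgroup G) (hKc : IsCompact (K : Set G)) (hKo : IsOpen (K : Set G))
    {E : Type*} [NormedAddCommGroup E] [InnerProductSpace ℂ E] [CompleteSpace E]
    (π : G →* (E ≃ₗᵢ[ℂ] E))
    (hcont : ∀ v : E, Continuous fun g : G => π g v)
    (hirr : ∀ F : Submodule ℂ E, IsClosed (F : Set E) →
      (∀ g : G, ∀ x ∈ F, π g x ∈ F) → F = ⊥ ∨ F = ⊤) :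
    ∀ W : Submodule ℂ E, IsClosed (W : Set E) → W ≤ fixedSubmodule π K →
      (∀ f : G → ℂ, Continuous f → HasCompactSupport f →
        (∀ k₁ ∈ K, ∀ k₂ ∈ K, ∀ g : G, f (k₁ * g * k₂) = f g) →
        ∀ v ∈ W, (∫ g : G, f g • (π g v) ∂μ) ∈ W) →
      W = ⊥ ∨ W = fixedSubmodule π K := by
  intro W hWc hWfix hWinv
  by_cases hW0 : W = ⊥
  · exact Or.inl hW0
  right
  obtain ⟨w, hwW, hw0⟩ := Submodule.exists_mem_ne_zero_of_ne_bot hW0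
  have hwfix : w ∈ fixedSubmodule π K := hWfix hwW
  -- Key step: any K-fixed vector orthogonal to W is zero.
  have key : ∀ u : E, u ∈ fixedSubmodule π K → u ∈ Wᗮ → u = 0 := by
    intro u hu huW
    -- matrix coefficient vanishing
    have hphi : ∀ g : G, (inner ℂ u (π g w) : ℂ) = 0 := by
      intro g
      set S : Set G := (K : Set G) * ({g} : Set G) * (K : Set G) with hSdef
      have hmemS : ∀ x, x ∈ S ↔ ∃ a ∈ K, ∃ b ∈ K, x = a * g * b := by
        intro x
        simp only [hSdef, Set.mem_mul, Set.mem_singleton_iff, SetLike.mem_coe]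
        constructor
        · rintro ⟨y, ⟨a, ha, z, rfl, rfl⟩, b, hb, rfl⟩
          exact ⟨a, ha, b, hb, rfl⟩
        · rintro ⟨a, ha, b, hb, rfl⟩
          exact ⟨a * g, ⟨a, ha, g, rfl, rfl⟩, b, hb, rfl⟩
      have hgS : g ∈ S := (hmemS g).2 ⟨1, K.one_mem, 1, K.one_mem, by simp⟩
      have hSopen : IsOpen S := by rw [hSdef]; exact hKo.mul_left
      have hSco : IsCompact S := by
        have himg : S = (fun p : G × G => p.1 * g * p.2) '' ((↑K : Set G) ×ˢ (↑K : Set G)) := by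
          ext x
          rw [hmemS]
          constructor
          · rintro ⟨a, ha, b, hb, rfl⟩
            exact ⟨⟨a, b⟩, ⟨ha, hb⟩, rfl⟩
          · rintro ⟨⟨a, b⟩, ⟨ha, hb⟩, rfl⟩
            exact ⟨a, ha, b, hb, rfl⟩
        rw [himg]
        exact (hKc.prod hKc).image ((continuous_fst.mul continuous_const).mul continuous_snd)
      have hSclosed : IsClosed S := by
        rw [← isOpen_compl_iff, isOpen_iff_forall_mem_open]
        intro y hy
        refine ⟨(y * ·) '' (↑K : Set G), ?_, ?_, ⟨1, K.one_mem, by simp⟩⟩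
        · rintro z ⟨k, hk, rfl⟩ hz
          obtain ⟨a, ha, b, hb, hab⟩ := (hmemS _).1 hz
          refine hy ((hmemS y).2 ⟨a, ha, b * k⁻¹, K.mul_mem hb (K.inv_mem hk), ?_⟩)
          have : a * g * (b * k⁻¹) = (a * g * b) * k⁻¹ := by group
          rw [this, ← hab, mul_inv_cancel_right]
        · exact (Homeomorph.mulLeft y).isOpenMap _ hKo
      set f : G → ℂ := S.indicator fun _ => (1 : ℂ) with hfdef
      have hfc : Continuous f := by
        rw [continuous_iff_continuousAt]
        intro x
        by_cases hx : x ∈ S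
        · have hev : f =ᶠ[nhds x] fun _ => (1 : ℂ) := by
            filter_upwards [hSopen.mem_nhds hx] with y hy
            simp [hfdef, Set.indicator_of_mem hy]
          exact hev.continuousAt
        · have hev : f =ᶠ[nhds x] fun _ => (0 : ℂ) := by
            filter_upwards [hSclosed.isOpen_compl.mem_nhds hx] with y hy
            simp [hfdef, Set.indicator_of_notMem hy]
          exact hev.continuousAt
      have hfs : HasCompactSupport f :=
        hSco.of_isClosed_subset (isClosed_tsupport _)
          (closure_minimal Set.support_indicator_subset hSclosed)
      have hSiff : ∀ k₁ ∈ K, ∀ k₂ ∈ K, ∀ x : G, (k₁ * x * k₂ ∈ S ↔ x ∈ S) := by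
        intro k₁ hk₁ k₂ hk₂ x
        constructor
        · intro hx
          obtain ⟨a, ha, b, hb, hab⟩ := (hmemS _).1 hx
          refine (hmemS x).2 ⟨k₁⁻¹ * a, K.mul_mem (K.inv_mem hk₁) ha, b * k₂⁻¹,
            K.mul_mem hb (K.inv_mem hk₂), ?_⟩
          have : k₁⁻¹ * a * g * (b * k₂⁻¹) = k₁⁻¹ * (a * g * b) * k₂⁻¹ := by group
          rw [this, ← hab]; group
        · intro hx
          obtain ⟨a, ha, b, hb, rfl⟩ := (hmemS _).1 hx
          refine (hmemS _).2 ⟨k₁ * a, K.mul_mem hk₁ ha, b * k₂, K.mul_mem hb hk₂, by group⟩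
      have hfinv : ∀ k₁ ∈ K, ∀ k₂ ∈ K, ∀ x : G, f (k₁ * x * k₂) = f x := by
        intro k₁ hk₁ k₂ hk₂ x
        by_cases hx : x ∈ S
        · rw [hfdef]
          rw [Set.indicator_of_mem hx, Set.indicator_of_mem ((hSiff k₁ hk₁ k₂ hk₂ x).2 hx)]
        · rw [hfdef]
          rw [Set.indicator_of_notMem hx,
            Set.indicator_of_notMem (fun h => hx ((hSiff k₁ hk₁ k₂ hk₂ x).1 h))]
      have hI : (∫ x : G, f x • (π x w) ∂μ) ∈ W := hWinv f hfc hfs hfinv w hwW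
      have hint : Integrable (fun x : G => f x • (π x w)) μ :=
        (hfc.smul (hcont w)).integrable_of_hasCompactSupport hfs.smul_right
      have h0 : (inner ℂ u (∫ x : G, f x • (π x w) ∂μ) : ℂ) = 0 :=
        inner_eq_zero_symm.mp ((Submodule.mem_orthogonal _ _).1 huW _ hI)
      have h1 : ∫ x : G, (inner ℂ u (f x • (π x w)) : ℂ) ∂μ = 0 := by
        rw [integral_inner hint u]; exact h0
      have heq : ∀ x : G, (inner ℂ u (f x • (π x w)) : ℂ)
          = S.indicator (fun x => (inner ℂ u (π x w) : ℂ)) x := by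
        intro x
        by_cases hx : x ∈ S
        · simp [hfdef, Set.indicator_of_mem hx, inner_smul_right]
        · simp [hfdef, Set.indicator_of_notMem hx]
      have hconst : ∀ x ∈ S, (inner ℂ u (π x w) : ℂ) = inner ℂ u (π g w) := by
        intro x hx
        obtain ⟨a, ha, b, hb, rfl⟩ := (hmemS x).1 hx
        have hb' : π b w = w := hwfix b hb
        have ha' : π a u = u := hu a ha
        have hx' : (π (a * g * b)) w = (π a) ((π g) w) := by
          simp [map_mul, hb']
        rw [hx', ← ha', LinearIsometryEquiv.inner_map_map, ha']
      have h2 : ∫ x : G, (inner ℂ u (f x • (π x w)) : ℂ) ∂μ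
          = (μ S).toReal • (inner ℂ u (π g w) : ℂ) := by
        simp_rw [heq]
        rw [integral_indicator hSopen.measurableSet]
        rw [setIntegral_congr_fun hSopen.measurableSet hconst, setIntegral_const]; rfl
      have hμS : (μ S).toReal ≠ 0 := by
        refine ENNReal.toReal_ne_zero.2 ⟨(hSopen.measure_pos μ ⟨g, hgS⟩).ne', hSco.measure_lt_top.ne⟩
      rw [h2] at h1
      rcases smul_eq_zero.mp h1 with h | h
      · exact absurd h hμS
      · exact h
    -- the closed invariant subspace generated by w is everything
    set N : Submodule ℂ E :=
      (Submodule.span ℂ (Set.range fun g : G => (π g) w)).topologicalClosure with hNdef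
    have hNclosed : IsClosed (N : Set E) := Submodule.isClosed_topologicalClosure _
    have hNinv : ∀ g : G, ∀ x ∈ N, π g x ∈ N := by
      intro g x hx
      set s : Submodule ℂ E := Submodule.span ℂ (Set.range fun g : G => (π g) w) with hsdef
      have hmap : ∀ y ∈ s, π g y ∈ s := by
        intro y hy
        have : Submodule.map ((π g).toLinearEquiv.toLinearMap) s ≤ s := by
          rw [hsdef, Submodule.map_span, Submodule.span_le]
          rintro _ ⟨_, ⟨h, rfl⟩, rfl⟩
          refine Submodule.subset_span ⟨g * h, ?_⟩
          simp [map_mul]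
        exact this ⟨y, hy, rfl⟩
      have hxc : x ∈ closure (s : Set E) := hx
      have : π g x ∈ closure (s : Set E) := by
        have h1 : (π g) x ∈ (fun y => (π g) y) '' closure (s : Set E) := ⟨x, hxc, rfl⟩
        have h2 : (fun y => (π g) y) '' closure (s : Set E)
            ⊆ closure ((fun y => (π g) y) '' (s : Set E)) :=
          image_closure_subset_closure_image (π g).continuous
        have h3 : ((fun y => (π g) y) '' (s : Set E)) ⊆ (s : Set E) := by
          rintro _ ⟨y, hy, rfl⟩; exact hmap y hy
        exact closure_mono h3 (h2 h1)
      exact this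
    have hNtop : N = ⊤ := by
      rcases hirr N hNclosed hNinv with h | h
      · exfalso
        apply hw0
        have hwN : w ∈ N := by
          apply Submodule.le_topologicalClosure
          exact Submodule.subset_span ⟨1, by simp⟩
        rw [h] at hwN
        simpa using hwN
      · exact h
    -- u is orthogonal to all of N = ⊤, hence u = 0
    have hker : N ≤ LinearMap.ker ((innerSL ℂ u : E →L[ℂ] ℂ) : E →ₗ[ℂ] ℂ) := by
      apply Submodule.topologicalClosure_minimal
      · rw [Submodule.span_le]
        rintro _ ⟨g, rfl⟩
        simpa [LinearMap.mem_ker] using hphi g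
      · exact ContinuousLinearMap.isClosed_ker _
    have : (inner ℂ u u : ℂ) = 0 := by
      have := hker (hNtop ▸ Submodule.mem_top : u ∈ N)
      simpa [LinearMap.mem_ker] using this
    exact inner_self_eq_zero.mp this
  -- conclude W = fixedSubmodule
  refine le_antisymm hWfix ?_
  intro v hv
  haveI : CompleteSpace W := hWc.completeSpace_coe
  have hpW : (↑(W.orthogonalProjectionOnto v) : E) ∈ W := SetLike.coe_mem _
  have huW : v - ↑(W.orthogonalProjectionOnto v) ∈ Wᗮ := W.sub_starProjection_mem_orthogonal v
  have hufix : v - ↑(W.orthogonalProjectionOnto v) ∈ fixedSubmodule π K :=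
    Submodule.sub_mem _ hv (hWfix hpW)
  have h := key _ hufix huW
  rw [sub_eq_zero] at h
  rw [h]
  exact hpW
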